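/- arXiv:2305.15031 — 4 statements merged into one kernel-verified Lean document; each statement's English description precedes it below -/
import Mathlib

section
/- Let m, q ≥ 1 and let f : S^m → S^q be 1-Lipschitz for the angular metrics. Let S = {u ∈ S^m : f(−u) = −f(u)}. Then: (a) for any u₁, u₂ ∈ S with u₂ ≠ ±u₁, the great circle of S^m through u₁ and u₂ is contained in S; (b) the restriction of f to S preserves distances: d_{S^q}(f(u₁), f(u₂)) = d_{S^m}(u₁, u₂) for all u₁, u₂ ∈ S. -/
noncomputable def ang {n : ℕ} (u v : EuclideanSpace ℝ (Fin n)) : ℝ :=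
  Real.arccos (inner ℝ u v : ℝ)

/-- for a 1-Lipschitz map `f : S^m → S^q` (angular metrics), the set
`S = {u : f(-u) = -f(u)}` contains the great circle through any two of its
non-antipodal, distinct points, and `f` restricted to `S` preserves distances. -/
theorem stmt4 (m q : ℕ) (hm : 1 ≤ m) (hq : 1 ≤ q)
    (f : EuclideanSpace ℝ (Fin (m + 1)) → EuclideanSpace ℝ (Fin (q + 1)))
    (hmap : ∀ u ∈ Metric.sphere (0 : EuclideanSpace ℝ (Fin (m + 1))) 1,
      f u ∈ Metric.sphere (0 : EuclideanSpace ℝ (Fin (q + 1))) 1)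
    (hlip : ∀ u ∈ Metric.sphere (0 : EuclideanSpace ℝ (Fin (m + 1))) 1,
      ∀ v ∈ Metric.sphere (0 : EuclideanSpace ℝ (Fin (m + 1))) 1,
        ang (f u) (f v) ≤ ang u v)
    (S : Set (EuclideanSpace ℝ (Fin (m + 1))))
    (hS : S = {u | u ∈ Metric.sphere (0 : EuclideanSpace ℝ (Fin (m + 1))) 1 ∧
      f (-u) = -(f u)}) :
    (∀ u₁ ∈ S, ∀ u₂ ∈ S, u₂ ≠ u₁ → u₂ ≠ -u₁ →
      ∀ v ∈ Metric.sphere (0 : EuclideanSpace ℝ (Fin (m + 1))) 1,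
        v ∈ Submodule.span ℝ ({u₁, u₂} : Set (EuclideanSpace ℝ (Fin (m + 1)))) → v ∈ S) ∧
    (∀ u₁ ∈ S, ∀ u₂ ∈ S, ang (f u₁) (f u₂) = ang u₁ u₂) := by
  subst hS
  -- membership in the unit sphere means norm 1
  have hsph : ∀ {n : ℕ} (x : EuclideanSpace ℝ (Fin n)),
      x ∈ Metric.sphere (0 : EuclideanSpace ℝ (Fin n)) 1 ↔ ‖x‖ = 1 := by
    intro n x; exact mem_sphere_zero_iff_norm
  -- KEY: for u with f(-u) = -(f u), inner products with f-images are preserved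
  have key : ∀ u ∈ Metric.sphere (0 : EuclideanSpace ℝ (Fin (m + 1))) 1,
      f (-u) = -(f u) →
      ∀ w ∈ Metric.sphere (0 : EuclideanSpace ℝ (Fin (m + 1))) 1,
        (inner ℝ (f u) (f w) : ℝ) = inner ℝ u w := by
    intro u hu hfu w hw
    have hnu : -u ∈ Metric.sphere (0 : EuclideanSpace ℝ (Fin (m + 1))) 1 := by
      rw [hsph] at hu ⊢; simpa using hu
    have h1 := hlip u hu w hw
    have h2 := hlip (-u) hnu w hw
    rw [hfu] at h2
    unfold ang at h1 h2
    have e1 : (inner ℝ (-(f u)) (f w) : ℝ) = -(inner ℝ (f u) (f w) : ℝ) := by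
      simp [inner_neg_left]
    have e2 : (inner ℝ (-u) w : ℝ) = -(inner ℝ u w : ℝ) := by
      simp [inner_neg_left]
    rw [e1, e2, Real.arccos_neg, Real.arccos_neg] at h2
    have heq : Real.arccos (inner ℝ (f u) (f w) : ℝ) = Real.arccos (inner ℝ u w : ℝ) :=
      le_antisymm h1 (by linarith)
    have hb1 : |(inner ℝ (f u) (f w) : ℝ)| ≤ 1 := by
      have := abs_real_inner_le_norm (f u) (f w)
      rw [(hsph _).mp (hmap u hu), (hsph _).mp (hmap w hw)] at this
      simpa using this
    have hb2 : |(inner ℝ u w : ℝ)| ≤ 1 := by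
      have := abs_real_inner_le_norm u w
      rw [(hsph _).mp hu, (hsph _).mp hw] at this
      simpa using this
    rw [abs_le] at hb1 hb2
    calc (inner ℝ (f u) (f w) : ℝ)
        = Real.cos (Real.arccos (inner ℝ (f u) (f w) : ℝ)) :=
          (Real.cos_arccos hb1.1 hb1.2).symm
      _ = Real.cos (Real.arccos (inner ℝ u w : ℝ)) := by rw [heq]
      _ = inner ℝ u w := Real.cos_arccos hb2.1 hb2.2
  constructor
  · -- part (a)
    rintro u₁ ⟨hu₁, hf₁⟩ u₂ ⟨hu₂, hf₂⟩ _ _ v hv hspan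
    rw [Submodule.mem_span_pair] at hspan
    obtain ⟨a, b, hab⟩ := hspan
    -- main claim: for z on the sphere in the span, f z is determined
    have main : ∀ (a b : ℝ) (z : EuclideanSpace ℝ (Fin (m + 1))),
        z ∈ Metric.sphere (0 : EuclideanSpace ℝ (Fin (m + 1))) 1 →
        a • u₁ + b • u₂ = z → f z = a • f u₁ + b • f u₂ := by
      intro a b z hz habz
      have i1 : (inner ℝ (f u₁) (f z) : ℝ) = inner ℝ u₁ z := key u₁ hu₁ hf₁ z hz
      have i2 : (inner ℝ (f u₂) (f z) : ℝ) = inner ℝ u₂ z := key u₂ hu₂ hf₂ z hz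
      have i11 : (inner ℝ (f u₁) (f u₁) : ℝ) = inner ℝ u₁ u₁ := key u₁ hu₁ hf₁ u₁ hu₁
      have i12 : (inner ℝ (f u₁) (f u₂) : ℝ) = inner ℝ u₁ u₂ := key u₁ hu₁ hf₁ u₂ hu₂
      have i21 : (inner ℝ (f u₂) (f u₁) : ℝ) = inner ℝ u₂ u₁ := key u₂ hu₂ hf₂ u₁ hu₁
      have i22 : (inner ℝ (f u₂) (f u₂) : ℝ) = inner ℝ u₂ u₂ := key u₂ hu₂ hf₂ u₂ hu₂
      set w : EuclideanSpace ℝ (Fin (q + 1)) := a • f u₁ + b • f u₂ with hw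
      have hzz : (inner ℝ z z : ℝ) = 1 := by
        rw [real_inner_self_eq_norm_sq, (hsph _).mp hz]; norm_num
      have hzspan : (inner ℝ (a • u₁ + b • u₂) z : ℝ) = 1 := by rw [habz]; exact hzz
      have hwz : (inner ℝ w (f z) : ℝ) = 1 := by
        rw [hw, inner_add_left, real_inner_smul_left, real_inner_smul_left, i1, i2]
        rw [inner_add_left, real_inner_smul_left, real_inner_smul_left] at hzspan
        exact hzspan
      have hw1 : (inner ℝ (f u₁) w : ℝ) = inner ℝ u₁ z := by
        rw [hw, inner_add_right, real_inner_smul_right, real_inner_smul_right, i11, i12,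
          ← habz, inner_add_right, real_inner_smul_right, real_inner_smul_right]
      have hw2 : (inner ℝ (f u₂) w : ℝ) = inner ℝ u₂ z := by
        rw [hw, inner_add_right, real_inner_smul_right, real_inner_smul_right, i21, i22,
          ← habz, inner_add_right, real_inner_smul_right, real_inner_smul_right]
      have hww : (inner ℝ w w : ℝ) = 1 := by
        rw [show (inner ℝ w w : ℝ) = a * (inner ℝ (f u₁) w : ℝ) + b * (inner ℝ (f u₂) w : ℝ) by
          rw [hw]; rw [inner_add_left, real_inner_smul_left, real_inner_smul_left]]
        rw [hw1, hw2]
        rw [inner_add_left, real_inner_smul_left, real_inner_smul_left] at hzspan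
        exact hzspan
      have hfz : ‖f z‖ = 1 := (hsph _).mp (hmap z hz)
      have hnw : ‖w‖ ^ 2 = 1 := by rw [← real_inner_self_eq_norm_sq, hww]
      have hzero : ‖f z - w‖ ^ 2 = 0 := by
        rw [norm_sub_sq_real, hfz, hnw, real_inner_comm, hwz]; ring
      have : f z - w = 0 := by
        rw [pow_eq_zero_iff (by norm_num : 2 ≠ 0)] at hzero
        exact norm_eq_zero.mp hzero
      exact sub_eq_zero.mp this
    have hnv : -v ∈ Metric.sphere (0 : EuclideanSpace ℝ (Fin (m + 1))) 1 := by
      rw [hsph] at hv ⊢; simpa using hv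
    have h1 : f v = a • f u₁ + b • f u₂ := main a b v hv hab
    have h2 : f (-v) = (-a) • f u₁ + (-b) • f u₂ :=
      main (-a) (-b) (-v) hnv (by rw [neg_smul, neg_smul, ← neg_add, hab])
    refine ⟨hv, ?_⟩
    rw [h1, h2, neg_smul, neg_smul, neg_add]
  · -- part (b)
    rintro u₁ ⟨hu₁, hf₁⟩ u₂ ⟨hu₂, hf₂⟩
    unfold ang
    rw [key u₁ hu₁ hf₁ u₂ hu₂]
end

section
/- Let p, q ≥ 1. On ℝ^p ⊕ ℝ^{q+1} define the symmetric bilinear form b((a,a'),(c,c')) = ⟨a,c⟩ − ⟨a',c'⟩ (Euclidean inner products on each factor). Let f : S^{p-1} → S^q be any map, where S^{p-1} ⊂ ℝ^p and S^q ⊂ ℝ^{q+1} are the unit spheres. Suppose v = (w, w') ∈ ℝ^p ⊕ ℝ^{q+1} is nonzero, satisfies ⟨w,w⟩ = ⟨w',w'⟩ (so b(v,v) = 0), and b(v, (x, f(x))) ≤ 0 for all x ∈ S^{p-1}. Then w ≠ 0 and w' = |w| · f(w/|w|); that is, v is a positive multiple of a point (u, f(u)) on the graph of f. -/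
/-- for `b((a,a'),(c,c')) = ⟨a,c⟩ − ⟨a',c'⟩` on `ℝ^p ⊕ ℝ^{q+1}` and any map
`f : S^{p-1} → S^q`, a nonzero `b`-isotropic vector `(w,w')` pairing non-positively with the
whole graph of `f` is a positive multiple of a point of the graph:
`w ≠ 0` and `w' = ‖w‖ • f(w/‖w‖)`. -/
theorem stmt10 (p q : ℕ) (hp : 1 ≤ p) (hq : 1 ≤ q)
    (f : EuclideanSpace ℝ (Fin p) → EuclideanSpace ℝ (Fin (q + 1)))
    (hf : ∀ x ∈ Metric.sphere (0 : EuclideanSpace ℝ (Fin p)) 1,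
      f x ∈ Metric.sphere (0 : EuclideanSpace ℝ (Fin (q + 1))) 1)
    (w : EuclideanSpace ℝ (Fin p)) (w' : EuclideanSpace ℝ (Fin (q + 1)))
    (hne : ¬ (w = 0 ∧ w' = 0))
    (hiso : (inner ℝ w w : ℝ) = (inner ℝ w' w' : ℝ))
    (hdual : ∀ x ∈ Metric.sphere (0 : EuclideanSpace ℝ (Fin p)) 1,
      (inner ℝ w x : ℝ) - (inner ℝ w' (f x) : ℝ) ≤ 0) :
    w ≠ 0 ∧ w' = ‖w‖ • f (‖w‖⁻¹ • w) := by
  have hnorm : ‖w‖ = ‖w'‖ := by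
    have h1 : ‖w‖ ^ 2 = ‖w'‖ ^ 2 := by
      rw [← real_inner_self_eq_norm_sq, ← real_inner_self_eq_norm_sq]; exact hiso
    nlinarith [norm_nonneg w, norm_nonneg w']
  have hw : w ≠ 0 := by
    intro h
    apply hne
    refine ⟨h, ?_⟩
    have : ‖w'‖ = 0 := by rw [← hnorm, h, norm_zero]
    exact norm_eq_zero.mp this
  refine ⟨hw, ?_⟩
  set u : EuclideanSpace ℝ (Fin p) := ‖w‖⁻¹ • w with hu
  have hwpos : (0:ℝ) < ‖w‖ := norm_pos_iff.mpr hw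
  have husph : u ∈ Metric.sphere (0 : EuclideanSpace ℝ (Fin p)) 1 := by
    simp [hu, norm_smul, abs_of_pos (inv_pos.mpr hwpos), inv_mul_cancel₀ hwpos.ne']
  have hfu : ‖f u‖ = 1 := by
    have := hf u husph
    simpa [mem_sphere_iff_norm] using this
  have h1 : (inner ℝ w u : ℝ) = ‖w‖ := by
    rw [hu, real_inner_smul_right, real_inner_self_eq_norm_sq]
    field_simp
  have h2 : (inner ℝ w' (f u) : ℝ) ≤ ‖w'‖ * ‖f u‖ := real_inner_le_norm _ _
  have h3 : (inner ℝ w' (f u) : ℝ) = ‖w'‖ * ‖f u‖ := by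
    have := hdual u husph
    rw [h1] at this
    rw [hfu]
    nlinarith [hnorm]
  have := (inner_eq_norm_mul_iff_real).mp h3
  rw [hfu, one_smul] at this
  rw [this, hnorm]
end

section
/- Let q ≥ 1 and let b be a non-degenerate symmetric bilinear form of signature (2, q) on ℝ^{q+2}. Let v₀, v₂ ∈ ℝ^{q+2} be linearly independent vectors such that the restriction of b to W = span(v₀, v₂) is positive definite, and let α ∈ ℝ. Let v₁' be the unique vector of W with b(v₁', v₀) = b(v₁', v₂) = α, and set V = {v ∈ ℝ^{q+2} : b(v,v) = 1 and b(v₀, v) = b(v, v₂) = α}. Then: (a) V = {v₁' + w : w ∈ W^⊥, b(w,w) = 1 − b(v₁', v₁')}; (b) V is nonempty if and only if b(v₁', v₁') ≥ 1; (c) the subgroup of the orthogonal group O(b) fixing both v₀ and v₂ acts transitively on V. -/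
/-- `b` has signature `(p, q)` in restriction to the submodule `W`. -/
def SignatureOn {V : Type*} [AddCommGroup V] [Module ℝ V]
    (b : V →ₗ[ℝ] V →ₗ[ℝ] ℝ) (W : Submodule ℝ V) (p q : ℕ) : Prop :=
  ∃ P N : Submodule ℝ V, P ≤ W ∧ N ≤ W ∧ P ⊔ N = W ∧
    Module.finrank ℝ P = p ∧ Module.finrank ℝ N = q ∧
    (∀ v ∈ P, v ≠ 0 → 0 < b v v) ∧ (∀ v ∈ N, v ≠ 0 → b v v < 0) ∧
    (∀ v ∈ P, ∀ w ∈ N, b v w = 0)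

section ReflAux

variable {M : Type*} [AddCommGroup M] [Module ℝ M]

/-- The reflection in the vector `z`, as a linear map. -/
noncomputable def reflAux (b : M →ₗ[ℝ] M →ₗ[ℝ] ℝ) (z : M) : M →ₗ[ℝ] M :=
  LinearMap.id - (2 / b z z) • ((b.flip z).smulRight z)

lemma reflAux_apply (b : M →ₗ[ℝ] M →ₗ[ℝ] ℝ) (z x : M) :
    reflAux b z x = x - (2 / b z z * b x z) • z := by
  simp [reflAux, smul_smul]

lemma reflAux_invol (b : M →ₗ[ℝ] M →ₗ[ℝ] ℝ) (z : M) (hz : b z z ≠ 0) (x : M) :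
    reflAux b z (reflAux b z x) = x := by
  rw [reflAux_apply, reflAux_apply]
  rw [map_sub, LinearMap.sub_apply, map_smul, LinearMap.smul_apply, smul_eq_mul]
  have h : (2 / b z z * (b x z - 2 / b z z * b x z * b z z)) = -(2 / b z z * b x z) := by
    field_simp; ring
  rw [h]
  module

lemma reflAux_isom (b : M →ₗ[ℝ] M →ₗ[ℝ] ℝ) (hsymm : ∀ x y, b x y = b y x)
    (z : M) (hz : b z z ≠ 0) (x y : M) :
    b (reflAux b z x) (reflAux b z y) = b x y := by
  rw [reflAux_apply, reflAux_apply]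
  simp only [map_sub, map_smul, LinearMap.sub_apply, LinearMap.smul_apply, smul_eq_mul]
  rw [hsymm z y]
  field_simp
  ring

/-- The reflection in the vector `z`, as a linear equivalence. -/
noncomputable def reflEquiv (b : M →ₗ[ℝ] M →ₗ[ℝ] ℝ) (z : M) (hz : b z z ≠ 0) : M ≃ₗ[ℝ] M :=
  LinearEquiv.ofLinear (reflAux b z) (reflAux b z)
    (by ext x; simp [reflAux_invol b z hz]) (by ext x; simp [reflAux_invol b z hz])

lemma reflEquiv_apply (b : M →ₗ[ℝ] M →ₗ[ℝ] ℝ) (z : M) (hz : b z z ≠ 0) (x : M) :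
    reflEquiv b z hz x = x - (2 / b z z * b x z) • z := reflAux_apply b z x

lemma reflEquiv_fix (b : M →ₗ[ℝ] M →ₗ[ℝ] ℝ) (z : M) (hz : b z z ≠ 0) (x : M)
    (hx : b x z = 0) : reflEquiv b z hz x = x := by
  rw [reflEquiv_apply, hx]; simp

lemma reflEquiv_isom (b : M →ₗ[ℝ] M →ₗ[ℝ] ℝ) (hsymm : ∀ x y, b x y = b y x)
    (z : M) (hz : b z z ≠ 0) (x y : M) :
    b (reflEquiv b z hz x) (reflEquiv b z hz y) = b x y :=
  reflAux_isom b hsymm z hz x y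

end ReflAux

set_option maxHeartbeats 1600000 in
/-- for a non-degenerate symmetric bilinear form `b` of signature `(2,q)` on
`ℝ^{q+2}`, linearly independent `v₀, v₂` spanning a positive definite plane `W`, and
`v₁' ∈ W` the (unique) vector with `b(v₁',v₀) = b(v₁',v₂) = α`: the set
`V = {v : b(v,v) = 1, b(v₀,v) = b(v,v₂) = α}` is `{v₁' + w : w ∈ W^⊥, b(w,w) = 1 − b(v₁',v₁')}`;
it is nonempty iff `b(v₁',v₁') ≥ 1`; and the subgroup of `O(b)` fixing `v₀` and `v₂` acts
transitively on it. -/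
theorem stmt13 (q : ℕ) (hq : 1 ≤ q)
    (b : (Fin (q + 2) → ℝ) →ₗ[ℝ] (Fin (q + 2) → ℝ) →ₗ[ℝ] ℝ)
    (hsymm : ∀ x y, b x y = b y x)
    (hnd : ∀ v, (∀ w, b v w = 0) → v = 0)
    (hsig : SignatureOn b ⊤ 2 q)
    (v₀ v₂ : Fin (q + 2) → ℝ)
    (hli : LinearIndependent ℝ ![v₀, v₂])
    (hpos : ∀ w ∈ Submodule.span ℝ ({v₀, v₂} : Set (Fin (q + 2) → ℝ)),
      w ≠ 0 → 0 < b w w)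
    (α : ℝ) (v₁' : Fin (q + 2) → ℝ)
    (hv₁'mem : v₁' ∈ Submodule.span ℝ ({v₀, v₂} : Set (Fin (q + 2) → ℝ)))
    (hv₁'0 : b v₁' v₀ = α) (hv₁'2 : b v₁' v₂ = α) :
    ({v | b v v = 1 ∧ b v₀ v = α ∧ b v v₂ = α} : Set (Fin (q + 2) → ℝ)) =
      {v | ∃ w : Fin (q + 2) → ℝ,
        (∀ u ∈ Submodule.span ℝ ({v₀, v₂} : Set (Fin (q + 2) → ℝ)), b u w = 0) ∧
        b w w = 1 - b v₁' v₁' ∧ v = v₁' + w} ∧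
    (({v | b v v = 1 ∧ b v₀ v = α ∧ b v v₂ = α} : Set (Fin (q + 2) → ℝ)).Nonempty ↔
      1 ≤ b v₁' v₁') ∧
    (∀ u ∈ ({v | b v v = 1 ∧ b v₀ v = α ∧ b v v₂ = α} : Set (Fin (q + 2) → ℝ)),
      ∀ u' ∈ ({v | b v v = 1 ∧ b v₀ v = α ∧ b v v₂ = α} : Set (Fin (q + 2) → ℝ)),
        ∃ g : (Fin (q + 2) → ℝ) ≃ₗ[ℝ] (Fin (q + 2) → ℝ),
          (∀ x y, b (g x) (g y) = b x y) ∧ g v₀ = v₀ ∧ g v₂ = v₂ ∧ g u = u') := by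
  classical
  have hsv₀ : v₀ ∈ Submodule.span ℝ ({v₀, v₂} : Set (Fin (q + 2) → ℝ)) :=
    Submodule.subset_span (by simp)
  have hsv₂ : v₂ ∈ Submodule.span ℝ ({v₀, v₂} : Set (Fin (q + 2) → ℝ)) :=
    Submodule.subset_span (by simp)
  have hli2 : ∀ s t : ℝ, s • v₀ + t • v₂ = 0 → s = 0 ∧ t = 0 := by
    intro s t h
    have h2 := Fintype.linearIndependent_iff.mp hli ![s, t] (by
      rw [Fin.sum_univ_two]; simpa using h)
    exact ⟨h2 0, h2 1⟩
  have hv₂ne : v₂ ≠ 0 := by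
    intro h
    have := (hli2 0 1 (by rw [h]; simp)).2
    norm_num at this
  have hb0 : b v₀ v₁' = α := (hsymm v₀ v₁').trans hv₁'0
  have hb2 : b v₂ v₁' = α := (hsymm v₂ v₁').trans hv₁'2
  obtain ⟨a₁, c₁, hac⟩ := Submodule.mem_span_pair.mp hv₁'mem
  -- ## Part (a): the set equality
  have hset : ({v | b v v = 1 ∧ b v₀ v = α ∧ b v v₂ = α} : Set (Fin (q + 2) → ℝ)) =
      {v | ∃ w : Fin (q + 2) → ℝ,
        (∀ u ∈ Submodule.span ℝ ({v₀, v₂} : Set (Fin (q + 2) → ℝ)), b u w = 0) ∧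
        b w w = 1 - b v₁' v₁' ∧ v = v₁' + w} := by
    ext v
    simp only [Set.mem_setOf_eq]
    constructor
    · rintro ⟨h1, h2, h3⟩
      have e0 : b v₀ (v - v₁') = 0 := by rw [map_sub, h2, hb0, sub_self]
      have e2 : b v₂ (v - v₁') = 0 := by
        rw [map_sub, hsymm v₂ v, h3, hb2, sub_self]
      refine ⟨v - v₁', ?_, ?_, by abel⟩
      · intro u hu
        obtain ⟨s, t, rfl⟩ := Submodule.mem_span_pair.mp hu
        simp only [map_add, map_smul, LinearMap.add_apply, LinearMap.smul_apply,
          smul_eq_mul, e0, e2]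
        ring
      · have kv : b v₁' v = a₁ * α + c₁ * α := by
          rw [← hac]
          simp only [map_add, map_smul, LinearMap.add_apply, LinearMap.smul_apply,
            smul_eq_mul, h2, hsymm v₂ v, h3]
        have kv' : b v₁' v₁' = a₁ * α + c₁ * α := by
          nth_rewrite 1 [← hac]
          simp only [map_add, map_smul, LinearMap.add_apply, LinearMap.smul_apply,
            smul_eq_mul, hb0, hb2]
        have kvv : b v v₁' = a₁ * α + c₁ * α := (hsymm v v₁').trans kv
        simp only [map_sub, LinearMap.sub_apply, kv', kv, kvv, h1]
        ring
    · rintro ⟨w, hperp, hww, rfl⟩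
      have e0 : b v₀ w = 0 := hperp v₀ hsv₀
      have e2 : b v₂ w = 0 := hperp v₂ hsv₂
      have e1 : b v₁' w = 0 := hperp v₁' hv₁'mem
      have e1' : b w v₁' = 0 := (hsymm w v₁').trans e1
      refine ⟨?_, ?_, ?_⟩
      · simp only [map_add, LinearMap.add_apply, e1, e1', hww]
        ring
      · rw [map_add, hb0, e0, add_zero]
      · rw [map_add, LinearMap.add_apply, hv₁'2, (hsymm w v₂).trans e2, add_zero]
  -- ## negative semidefiniteness on the orthogonal complement of W
  have hnegsemi : ∀ w, b v₀ w = 0 → b v₂ w = 0 → b w w ≤ 0 := by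
    intro w h0 h2
    by_contra hcon
    push_neg at hcon
    obtain ⟨P, N, hP, hN, hPN, hPrk, hNrk, hPpos, hNneg, hPNorth⟩ := hsig
    have hwW : b w w ≠ 0 := ne_of_gt hcon
    have hliU : LinearIndependent ℝ ![v₀, v₂, w] := by
      rw [Fintype.linearIndependent_iff]
      intro g hg
      rw [Fin.sum_univ_three] at hg
      simp only [Matrix.cons_val_zero, Matrix.cons_val_one, Matrix.head_cons,
        Matrix.cons_val_two, Matrix.tail_cons] at hg
      have hgw : g 2 = 0 := by
        have h3 := congrArg (fun x => b x w) hg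
        simp only [map_add, map_smul, LinearMap.add_apply, LinearMap.smul_apply,
          smul_eq_mul, h0, h2, map_zero, LinearMap.zero_apply] at h3
        have h4 : g 2 * b w w = 0 := by linarith
        rcases mul_eq_zero.mp h4 with h | h
        · exact h
        · exact absurd h hwW
      rw [hgw, zero_smul, add_zero] at hg
      obtain ⟨hh1, hh2⟩ := hli2 _ _ hg
      intro i
      fin_cases i
      · exact hh1
      · exact hh2
      · exact hgw
    have hr : Set.range ![v₀, v₂, w] = ({v₀, v₂, w} : Set (Fin (q + 2) → ℝ)) := by
      simp only [Matrix.range_cons, Matrix.range_empty, Set.singleton_union,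
        Set.union_empty]
    set U := Submodule.span ℝ ({v₀, v₂, w} : Set (Fin (q + 2) → ℝ)) with hU
    have hUrk : Module.finrank ℝ U = 3 := by
      rw [hU, ← hr, finrank_span_eq_card hliU]
      simp
    have hUpos : ∀ x ∈ U, x ≠ 0 → 0 < b x x := by
      intro x hx hxne
      rw [hU, ← hr] at hx
      obtain ⟨c, hc⟩ := (Submodule.mem_span_range_iff_exists_fun ℝ).mp hx
      rw [Fin.sum_univ_three] at hc
      simp only [Matrix.cons_val_zero, Matrix.cons_val_one, Matrix.head_cons,
        Matrix.cons_val_two, Matrix.tail_cons] at hc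
      set u := c 0 • v₀ + c 1 • v₂ with hu
      have huW : u ∈ Submodule.span ℝ ({v₀, v₂} : Set (Fin (q + 2) → ℝ)) :=
        Submodule.mem_span_pair.mpr ⟨c 0, c 1, rfl⟩
      have huw : b u w = 0 := by
        rw [hu]
        simp only [map_add, map_smul, LinearMap.add_apply, LinearMap.smul_apply,
          smul_eq_mul, h0, h2]
        ring
      have hwu : b w u = 0 := (hsymm w u).trans huw
      have hbx : b x x = b u u + c 2 * c 2 * b w w := by
        rw [← hc]
        simp only [map_add, map_smul, LinearMap.add_apply, LinearMap.smul_apply,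
          smul_eq_mul, huw, hwu]
        ring
      by_cases ht : c 2 = 0
      · have hxu : x = u := by rw [← hc, ht]; simp
        have hune : u ≠ 0 := by rw [← hxu]; exact hxne
        rw [hbx, ht]
        have := hpos u huW hune
        nlinarith
      · have h5 : 0 < c 2 * c 2 * b w w := mul_pos (mul_self_pos.mpr ht) hcon
        have h6 : 0 ≤ b u u := by
          rcases eq_or_ne u 0 with h | h
          · rw [h]; simp
          · exact le_of_lt (hpos u huW h)
        rw [hbx]; linarith
    have hle : Module.finrank ℝ ↥(U ⊔ N) ≤ q + 2 := by
      have h7 := Submodule.finrank_le (U ⊔ N)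
      simpa using h7
    have heq := Submodule.finrank_sup_add_finrank_inf_eq U N
    rw [hUrk, hNrk] at heq
    have h8 : 0 < Module.finrank ℝ ↥(U ⊓ N) := by omega
    have h9 : (U ⊓ N) ≠ ⊥ := by
      intro hbot
      rw [hbot] at h8
      simp at h8
    obtain ⟨x, hxm, hxne⟩ := (Submodule.ne_bot_iff _).mp h9
    have hxU : x ∈ U := (Submodule.mem_inf.mp hxm).1
    have hxN : x ∈ N := (Submodule.mem_inf.mp hxm).2
    linarith [hUpos x hxU hxne, hNneg x hxN hxne]
  -- ## null vectors in W-perp pair to zero with all of W-perp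
  have hCS : ∀ w y, b v₀ w = 0 → b v₂ w = 0 → b v₀ y = 0 → b v₂ y = 0 →
      b w w = 0 → b w y = 0 := by
    intro w y hw0 hw2 hy0 hy2 hww
    by_contra hne
    have hkey : ∀ t : ℝ, 2 * t * b w y + b y y ≤ 0 := by
      intro t
      have hmem := hnegsemi (t • w + y)
        (by rw [map_add, map_smul, hw0, hy0]; simp)
        (by rw [map_add, map_smul, hw2, hy2]; simp)
      simp only [map_add, map_smul, LinearMap.add_apply, LinearMap.smul_apply,
        smul_eq_mul, hww, hsymm y w] at hmem
      nlinarith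
    have h1 := hkey ((1 - b y y) / (2 * b w y))
    have h2 : 2 * ((1 - b y y) / (2 * b w y)) * b w y = 1 - b y y := by
      field_simp
    rw [h2] at h1
    linarith
  -- ## Gram determinant is positive
  have h22 : 0 < b v₂ v₂ := hpos v₂ hsv₂ hv₂ne
  have hdet : 0 < b v₀ v₀ * b v₂ v₂ - b v₀ v₂ * b v₀ v₂ := by
    set r : ℝ := b v₀ v₂ / b v₂ v₂ with hr
    have hyne : v₀ - r • v₂ ≠ 0 := by
      intro h
      have := (hli2 1 (-r) (by rw [← h]; module)).1
      norm_num at this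
    have hyW : v₀ - r • v₂ ∈ Submodule.span ℝ ({v₀, v₂} : Set (Fin (q + 2) → ℝ)) :=
      Submodule.mem_span_pair.mpr ⟨1, -r, by module⟩
    have hy := hpos _ hyW hyne
    simp only [map_sub, map_smul, LinearMap.sub_apply, LinearMap.smul_apply,
      smul_eq_mul, hsymm v₂ v₀] at hy
    rw [hr] at hy
    have h3 : b v₂ v₂ ≠ 0 := ne_of_gt h22
    have hc : b v₀ v₂ / b v₂ v₂ * b v₂ v₂ = b v₀ v₂ := div_mul_cancel₀ _ h3
    have h0 : b v₀ v₂ / b v₂ v₂ * (b v₀ v₂ - b v₀ v₂ / b v₂ v₂ * b v₂ v₂) = 0 := by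
      rw [hc, sub_self, mul_zero]
    have hy' : 0 < b v₀ v₀ - b v₀ v₂ / b v₂ v₂ * b v₀ v₂ := by linarith
    have h5 : 0 < (b v₀ v₀ - b v₀ v₂ / b v₂ v₂ * b v₀ v₂) * b v₂ v₂ := mul_pos hy' h22
    have h6 : (b v₀ v₀ - b v₀ v₂ / b v₂ v₂ * b v₀ v₂) * b v₂ v₂
        = b v₀ v₀ * b v₂ v₂ - b v₀ v₂ * b v₀ v₂ := by
      field_simp
    linarith [h6 ▸ h5]
  -- ## decomposition: projection onto W
  have hdecomp : ∀ x : Fin (q + 2) → ℝ, ∃ s t : ℝ,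
      b v₀ (x - (s • v₀ + t • v₂)) = 0 ∧ b v₂ (x - (s • v₀ + t • v₂)) = 0 := by
    intro x
    set D : ℝ := b v₀ v₀ * b v₂ v₂ - b v₀ v₂ * b v₀ v₂ with hD
    have hDne : D ≠ 0 := ne_of_gt hdet
    refine ⟨(b v₂ v₂ * b v₀ x - b v₀ v₂ * b v₂ x) / D,
      (b v₀ v₀ * b v₂ x - b v₀ v₂ * b v₀ x) / D, ?_, ?_⟩
    · simp only [map_sub, map_add, map_smul, LinearMap.smul_apply, smul_eq_mul]
      field_simp
      rw [hD]
      ring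
    · simp only [map_sub, map_add, map_smul, LinearMap.smul_apply, smul_eq_mul,
        hsymm v₂ v₀]
      field_simp
      rw [hD]
      ring
  -- ## radical of W-perp is trivial
  have hrad : ∀ w, b v₀ w = 0 → b v₂ w = 0 → b w w = 0 → w = 0 := by
    intro w h0 h2 hww
    apply hnd
    intro x
    obtain ⟨s, t, hy0, hy2⟩ := hdecomp x
    have hCSx := hCS w (x - (s • v₀ + t • v₂)) h0 h2 hy0 hy2 hww
    have hwu : b w (s • v₀ + t • v₂) = 0 := by
      simp only [map_add, map_smul, smul_eq_mul, hsymm w v₀, hsymm w v₂, h0, h2]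
      ring
    have hx : b w x = b w (x - (s • v₀ + t • v₂)) + b w (s • v₀ + t • v₂) := by
      rw [← map_add]
      congr 1
      abel
    rw [hx, hCSx, hwu, add_zero]
  -- ## existence of a negative vector in W-perp
  have hnegex : ∃ w₀, b v₀ w₀ = 0 ∧ b v₂ w₀ = 0 ∧ b w₀ w₀ < 0 := by
    obtain ⟨P, N, hP, hN, hPN, hPrk, hNrk, hPpos, hNneg, hPNorth⟩ := hsig
    have hNne : N ≠ ⊥ := by
      intro hbot
      rw [hbot, finrank_bot] at hNrk
      omega
    obtain ⟨n, hnN, hnne⟩ := (Submodule.ne_bot_iff _).mp hNne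
    obtain ⟨s, t, hy0, hy2⟩ := hdecomp n
    set y := n - (s • v₀ + t • v₂) with hy
    by_cases hy0' : y = 0
    · exfalso
      have hnW : n ∈ Submodule.span ℝ ({v₀, v₂} : Set (Fin (q + 2) → ℝ)) := by
        have : n = s • v₀ + t • v₂ := by
          have := sub_eq_zero.mp hy0'
          exact this
        rw [this]
        exact Submodule.mem_span_pair.mpr ⟨s, t, rfl⟩
      linarith [hpos n hnW hnne, hNneg n hnN hnne]
    · refine ⟨y, hy0, hy2, ?_⟩
      rcases lt_or_eq_of_le (hnegsemi y hy0 hy2) with h | h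
      · exact h
      · exact absurd (hrad y hy0 hy2 h) hy0'
  refine ⟨hset, ?_, ?_⟩
  -- ## Part (b): nonemptiness
  · rw [hset]
    constructor
    · rintro ⟨v, w, hp, hww, rfl⟩
      have := hnegsemi w (hp v₀ hsv₀) (hp v₂ hsv₂)
      linarith
    · intro h1C
      obtain ⟨w₀, k0, k2, kneg⟩ := hnegex
      set t := Real.sqrt ((1 - b v₁' v₁') / b w₀ w₀) with htdef
      have harg : 0 ≤ (1 - b v₁' v₁') / b w₀ w₀ :=
        div_nonneg_iff.mpr (Or.inr ⟨by linarith, le_of_lt kneg⟩)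
      have ht2 : t * t = (1 - b v₁' v₁') / b w₀ w₀ := Real.mul_self_sqrt harg
      refine ⟨v₁' + t • w₀, t • w₀, ?_, ?_, rfl⟩
      · intro u hu
        obtain ⟨s', t', rfl⟩ := Submodule.mem_span_pair.mp hu
        simp only [map_add, map_smul, LinearMap.add_apply, LinearMap.smul_apply,
          smul_eq_mul, k0, k2]
        ring
      · have : b (t • w₀) (t • w₀) = t * t * b w₀ w₀ := by
          simp only [map_smul, LinearMap.smul_apply, smul_eq_mul]
          ring
        rw [this, ht2, div_mul_cancel₀ _ (ne_of_lt kneg)]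
  -- ## Part (c): transitivity
  · intro u hu u' hu'
    rw [hset] at hu hu'
    obtain ⟨w, hp, hww, rfl⟩ := hu
    obtain ⟨w', hp', hww', rfl⟩ := hu'
    have e0 : b v₀ w = 0 := hp v₀ hsv₀
    have e2 : b v₂ w = 0 := hp v₂ hsv₂
    have e1 : b v₁' w = 0 := hp v₁' hv₁'mem
    have e0' : b v₀ w' = 0 := hp' v₀ hsv₀
    have e2' : b v₂ w' = 0 := hp' v₂ hsv₂
    have e1' : b v₁' w' = 0 := hp' v₁' hv₁'mem
    by_cases hC : (1 : ℝ) - b v₁' v₁' = 0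
    · have hw0 : w = 0 := hrad w e0 e2 (hww.trans hC)
      have hw'0 : w' = 0 := hrad w' e0' e2' (hww'.trans hC)
      exact ⟨LinearEquiv.refl ℝ _, by simp, rfl, rfl, by rw [hw0, hw'0]; simp⟩

    · have hwwne : b w w ≠ 0 := by rw [hww]; exact hC
      have hw'w'ne : b w' w' ≠ 0 := by rw [hww']; exact hC
      have hsym' : b w' w = b w w' := hsymm w' w
      by_cases hz : b (w - w') (w - w') = 0
      · -- use reflection in w + w', then in w'
        have hm : b w w' = 1 - b v₁' v₁' := by
          have : b (w - w') (w - w') =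
              b w w - b w w' - b w' w + b w' w' := by
            simp only [map_sub, LinearMap.sub_apply]
            ring
          rw [hz] at this
          rw [hsym', hww, hww'] at this
          linarith
        have hzz2 : b (w + w') (w + w') = 4 * (1 - b v₁' v₁') := by
          simp only [map_add, LinearMap.add_apply]
          rw [hsym', hww, hww', hm]
          ring
        have hzzne : b (w + w') (w + w') ≠ 0 := by
          rw [hzz2]
          intro h
          apply hC
          linarith
        set g₁ := reflEquiv b (w + w') hzzne with hg₁
        set g₂ := reflEquiv b w' hw'w'ne with hg₂
        have hv₀z : b v₀ (w + w') = 0 := by rw [map_add, e0, e0', add_zero]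
        have hv₂z : b v₂ (w + w') = 0 := by rw [map_add, e2, e2', add_zero]
        have hv₁z : b v₁' (w + w') = 0 := by rw [map_add, e1, e1', add_zero]
        refine ⟨g₁.trans g₂, ?_, ?_, ?_, ?_⟩
        · intro x y
          rw [LinearEquiv.trans_apply, LinearEquiv.trans_apply, hg₂, hg₁,
            reflEquiv_isom b hsymm _ hw'w'ne, reflEquiv_isom b hsymm _ hzzne]
        · rw [LinearEquiv.trans_apply, hg₁, hg₂, reflEquiv_fix b _ hzzne v₀ hv₀z,
            reflEquiv_fix b _ hw'w'ne v₀ e0']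
        · rw [LinearEquiv.trans_apply, hg₁, hg₂, reflEquiv_fix b _ hzzne v₂ hv₂z,
            reflEquiv_fix b _ hw'w'ne v₂ e2']
        · have hcoef : 2 / b (w + w') (w + w') * b (v₁' + w) (w + w') = 1 := by
            have hb1 : b (v₁' + w) (w + w') = 2 * (1 - b v₁' v₁') := by
              simp only [map_add, LinearMap.add_apply, e1, e1', hww, hm]
              ring
            rw [hb1, hzz2]
            have : (1 : ℝ) - b v₁' v₁' ≠ 0 := hC
            field_simp
            ring
          have hg₁u : g₁ (v₁' + w) = v₁' - w' := by
            rw [hg₁, reflEquiv_apply, hcoef, one_smul]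
            abel
          rw [LinearEquiv.trans_apply, hg₁u]
          have hb2' : b (v₁' - w') w' = -(1 - b v₁' v₁') := by
            rw [map_sub, LinearMap.sub_apply, e1', hww']
            ring
          rw [hg₂, reflEquiv_apply, hb2']
          have hcoef2 : 2 / b w' w' * -(1 - b v₁' v₁') = -2 := by
            rw [hww']
            field_simp
          rw [hcoef2]
          module
      · -- use reflection in w - w'
        set g := reflEquiv b (w - w') hz with hg
        have hv₀z : b v₀ (w - w') = 0 := by rw [map_sub, e0, e0', sub_self]
        have hv₂z : b v₂ (w - w') = 0 := by rw [map_sub, e2, e2', sub_self]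
        have hzz : b (w - w') (w - w') = 2 * ((1 - b v₁' v₁') - b w w') := by
          simp only [map_sub, LinearMap.sub_apply]
          rw [hsym', hww, hww']
          ring
        have hcoef : 2 / b (w - w') (w - w') * b (v₁' + w) (w - w') = 1 := by
          have hb1 : b (v₁' + w) (w - w') = (1 - b v₁' v₁') - b w w' := by
            simp only [map_add, map_sub, LinearMap.add_apply, LinearMap.sub_apply,
              e1, e1', hww]
            ring
          have hdne : (1 - b v₁' v₁') - b w w' ≠ 0 := by
            intro h
            apply hz
            rw [hzz, h, mul_zero]
          rw [hb1, hzz]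
          field_simp
        refine ⟨g, ?_, ?_, ?_, ?_⟩
        · intro x y
          rw [hg, reflEquiv_isom b hsymm _ hz]
        · rw [hg, reflEquiv_fix b _ hz v₀ hv₀z]
        · rw [hg, reflEquiv_fix b _ hz v₂ hv₂z]
        · rw [hg, reflEquiv_apply, hcoef, one_smul]
          abel
end

section
/- Let p, q ≥ 1 and define b on ℝ^p ⊕ ℝ^{q+1} by b((a,a'),(c,c')) = ⟨a,c⟩ − ⟨a',c'⟩. Let f : S^{p-1} → S^q be 1-Lipschitz for the angular metrics. Then, for u ∈ S^{p-1}, the vector (u, f(u)) satisfies b((u, f(u)), (x, f(x))) = 0 for all x ∈ S^{p-1} if and only if f(−u) = −f(u). In other words, the b-orthogonal of the graph of f inside the span of the graph is generated by the points (u, f(u)) with f(−u) = −f(u). -/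
/-- for `b((a,a'),(c,c')) = ⟨a,c⟩ − ⟨a',c'⟩` on `ℝ^p ⊕ ℝ^{q+1}` and a
1-Lipschitz (for the angular metrics) map `f : S^{p-1} → S^q`, a point `(u, f(u))` of the
graph of `f` is `b`-orthogonal to the whole graph iff `f(−u) = −f(u)`. -/
theorem stmt16 (p q : ℕ) (hp : 1 ≤ p) (hq : 1 ≤ q)
    (f : EuclideanSpace ℝ (Fin p) → EuclideanSpace ℝ (Fin (q + 1)))
    (hmap : ∀ u ∈ Metric.sphere (0 : EuclideanSpace ℝ (Fin p)) 1,
      f u ∈ Metric.sphere (0 : EuclideanSpace ℝ (Fin (q + 1))) 1)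
    (hlip : ∀ u ∈ Metric.sphere (0 : EuclideanSpace ℝ (Fin p)) 1,
      ∀ v ∈ Metric.sphere (0 : EuclideanSpace ℝ (Fin p)) 1,
        ang (f u) (f v) ≤ ang u v) :
    ∀ u ∈ Metric.sphere (0 : EuclideanSpace ℝ (Fin p)) 1,
      ((∀ x ∈ Metric.sphere (0 : EuclideanSpace ℝ (Fin p)) 1,
        (inner ℝ u x : ℝ) - (inner ℝ (f u) (f x) : ℝ) = 0) ↔ f (-u) = -(f u)) := by
  intro u hu
  have hnu : (-u) ∈ Metric.sphere (0 : EuclideanSpace ℝ (Fin p)) 1 := by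
    simpa [mem_sphere_zero_iff_norm] using (mem_sphere_zero_iff_norm.mp hu)
  have hun : ‖u‖ = 1 := mem_sphere_zero_iff_norm.mp hu
  have hfu : ‖f u‖ = 1 := mem_sphere_zero_iff_norm.mp (hmap u hu)
  have hfnu : ‖f (-u)‖ = 1 := mem_sphere_zero_iff_norm.mp (hmap _ hnu)
  constructor
  · intro h
    have h1 := h (-u) hnu
    have huu : (inner ℝ u (-u) : ℝ) = -1 := by
      rw [inner_neg_right, real_inner_self_eq_norm_sq, hun]; norm_num
    have h2 : (inner ℝ (f u) (-f (-u)) : ℝ) = 1 := by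
      rw [inner_neg_right]; rw [huu] at h1; linarith
    have := (inner_eq_one_iff_of_norm_eq_one hfu (by simpa using hfnu)).mp h2
    simpa using (congrArg Neg.neg this).symm
  · intro hfa x hx
    have hfx : ‖f x‖ = 1 := mem_sphere_zero_iff_norm.mp (hmap x hx)
    have hb1 : |(inner ℝ u x : ℝ)| ≤ 1 := by
      have := abs_real_inner_le_norm u x
      rwa [hun, mem_sphere_zero_iff_norm.mp hx, one_mul] at this
    have hb2 : |(inner ℝ (f u) (f x) : ℝ)| ≤ 1 := by
      have := abs_real_inner_le_norm (f u) (f x)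
      rwa [hfu, hfx, one_mul] at this
    have hle : ang (f u) (f x) ≤ ang u x := hlip u hu x hx
    have hge : ang u x ≤ ang (f u) (f x) := by
      have h2 := hlip (-u) hnu x hx
      unfold ang at h2 ⊢
      rw [hfa, inner_neg_left, inner_neg_left, Real.arccos_neg, Real.arccos_neg] at h2
      linarith
    have heq : ang (f u) (f x) = ang u x := le_antisymm hle hge
    unfold ang at heq
    have := congrArg Real.cos heq
    rw [Real.cos_arccos (by linarith [abs_le.mp hb2]) (by linarith [abs_le.mp hb2]),
        Real.cos_arccos (by linarith [abs_le.mp hb1]) (by linarith [abs_le.mp hb1])] at this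
    linarith
end
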